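/- Let P* = P₁ ∘ P₂ be an optimal (minimum-cost) s–t' secluded path in a graph of maximum degree Δ, partitioned so that |P₁| ≥ Δ + 2, and let σ be the (Δ+2)-vertex suffix of P₁. Then Δ(P₂, P₁) = Δ(P₂, σ), i.e., no vertex of N[P₂] lies in N[P₁ minus its suffix] outside N[σ]. -/

import Mathlib

open Finset

/-- The closed neighborhood of a set `S` of vertices. -/
def nbhd {V : Type*} [Fintype V] [DecidableEq V] (G : SimpleGraph V) [DecidableRel G.Adj]
    (S : Finset V) : Finset V :=
  S ∪ univ.filter (fun v => ∃ u ∈ S, G.Adj u v)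

/-- The exposure cost of a walk. -/
def wcost {V : Type*} [Fintype V] [DecidableEq V] (G : SimpleGraph V) [DecidableRel G.Adj]
    {s t : V} (p : G.Walk s t) : ℕ :=
  (nbhd G p.support.toFinset).card

lemma mem_nbhd {V : Type*} [Fintype V] [DecidableEq V] {G : SimpleGraph V} [DecidableRel G.Adj]
    {S : Finset V} {v : V} : v ∈ nbhd G S ↔ ∃ u ∈ S, u = v ∨ G.Adj u v := by
  simp only [nbhd, mem_union, mem_filter, mem_univ, true_and]
  constructor
  · rintro (h | ⟨u, hu, ha⟩)
    · exact ⟨v, h, Or.inl rfl⟩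
    · exact ⟨u, hu, Or.inr ha⟩
  · rintro ⟨u, hu, rfl | ha⟩
    · exact Or.inl hu
    · exact Or.inr ⟨u, hu, ha⟩

lemma nbhd_mono {V : Type*} [Fintype V] [DecidableEq V] {G : SimpleGraph V} [DecidableRel G.Adj]
    {S T : Finset V} (h : S ⊆ T) : nbhd G S ⊆ nbhd G T := by
  intro v hv
  rw [mem_nbhd] at hv ⊢
  obtain ⟨u, hu, hx⟩ := hv
  exact ⟨u, h hu, hx⟩

lemma walk_support_getElem {V : Type*} {G : SimpleGraph V} {u v : V} (p : G.Walk u v) :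
    ∀ (i : ℕ) (hi : i < p.support.length), p.support[i] = p.getVert i := by
  induction p with
  | nil => intro i hi; simp only [SimpleGraph.Walk.support_nil, List.length_singleton] at hi
           interval_cases i <;> simp [SimpleGraph.Walk.getVert]
  | cons h q ih =>
      intro i hi
      cases i with
      | zero => simp
      | succ n =>
          simp only [SimpleGraph.Walk.support_cons, List.getElem_cons_succ,
            SimpleGraph.Walk.getVert_cons_succ]
          exact ih n (by simpa [SimpleGraph.Walk.support_cons] using Nat.lt_of_succ_lt_succ hi)

lemma takeUntil_support_spec {V : Type*} {G : SimpleGraph V} [DecidableEq V] {u v y : V}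
    (p : G.Walk u v) (hy : y ∈ p.support) :
    ∃ k, 1 ≤ k ∧ k ≤ p.support.length ∧
      (p.takeUntil y hy).support = p.support.take k ∧
      (p.dropUntil y hy).support = p.support.drop (k - 1) ∧
      ∃ hk : k - 1 < p.support.length, p.support[k - 1] = y := by
  have hsupp : (p.takeUntil y hy).support ++ (p.dropUntil y hy).support.tail = p.support := by
    rw [← SimpleGraph.Walk.support_append, SimpleGraph.Walk.take_spec p hy]
  have hk1 : 1 ≤ (p.takeUntil y hy).support.length := by
    rw [SimpleGraph.Walk.length_support]; omega
  have hkle : (p.takeUntil y hy).support.length ≤ p.support.length := by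
    rw [← hsupp]; simp
  have htake : p.support.take (p.takeUntil y hy).support.length = (p.takeUntil y hy).support := by
    rw [← hsupp, List.take_left]
  have hTne : (p.takeUntil y hy).support ≠ [] := List.ne_nil_of_length_pos hk1
  have hlt : (p.takeUntil y hy).support.length - 1 < p.support.length := by omega
  have hget : p.support[(p.takeUntil y hy).support.length - 1]'hlt = y := by
    have h2 := List.getLast_eq_getElem hTne
    rw [SimpleGraph.Walk.getLast_support] at h2
    have h3 : (p.support.take (p.takeUntil y hy).support.length)[(p.takeUntil y hy).support.length - 1]'(by rw [htake]; omega) = y := by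
      simp_rw [htake]; exact h2.symm
    rw [List.getElem_take] at h3
    exact h3
  have hdroptail : p.support.drop (p.takeUntil y hy).support.length
      = (p.dropUntil y hy).support.tail := by
    rw [← hsupp, List.drop_left]
  refine ⟨(p.takeUntil y hy).support.length, hk1, hkle, htake.symm, ?_, hlt, hget⟩
  rw [List.drop_eq_getElem_cons hlt, hget]
  have heq : (p.takeUntil y hy).support.length - 1 + 1 = (p.takeUntil y hy).support.length := by
    omega
  rw [heq, hdroptail]
  exact SimpleGraph.Walk.support_eq_cons _

lemma mem_take_drop {α : Type*} {l : List α} {c d : ℕ} {x : α} :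
    x ∈ (l.take c).drop d ↔ ∃ j, d ≤ j ∧ j < c ∧ ∃ hj : j < l.length, l[j] = x := by
  constructor
  · intro h
    obtain ⟨i, hi, he⟩ := List.mem_iff_getElem.mp h
    have hlen : ((l.take c).drop d).length = min c l.length - d := by simp
    rw [List.getElem_drop, List.getElem_take] at he
    exact ⟨d + i, by omega, by omega, by omega, he⟩
  · rintro ⟨j, hd, hc, hj, he⟩
    obtain ⟨i, rfl⟩ : ∃ i, j = d + i := ⟨j - d, by omega⟩
    refine List.mem_iff_getElem.mpr ⟨i, ?_, ?_⟩
    · simp; omega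
    · rw [List.getElem_drop, List.getElem_take]; exact he

lemma take_append_drop_sublist {α : Type*} (l : List α) {i j : ℕ} (hij : i ≤ j) :
    List.Sublist (l.take i ++ l.drop j) l := by
  have h1 : l.take i = (l.take j).take i := by rw [List.take_take, min_eq_left hij]
  have h2 : List.Sublist (l.take i ++ l.drop j) (l.take j ++ l.drop j) := by
    rw [h1]; exact (List.take_sublist i (l.take j)).append (List.Sublist.refl _)
  simpa [List.take_append_drop] using h2

/-- Let `P* = P₁ ∘ P₂` be an optimal (minimum-cost, shortcut-free) `s–t'` secluded path
in a graph of maximum degree `Δ` with `P₁` having at least `Δ + 2` vertices, and let `σ`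
be the `(Δ+2)`-vertex suffix of `P₁`.  Then `Δ(P₂, P₁) = Δ(P₂, σ)`. -/
theorem diff_suffix_of_optimal_path {V : Type*} [Fintype V] [DecidableEq V]
    (G : SimpleGraph V) [DecidableRel G.Adj]
    {s m t' : V} (p1 : G.Walk s m) (p2 : G.Walk m t')
    (hp : (p1.append p2).IsPath)
    (hopt : ∀ q : G.Walk s t', q.IsPath → wcost G (p1.append p2) ≤ wcost G q)
    (hshortcutfree : ∀ u v : V, u ∈ (p1.append p2).support → v ∈ (p1.append p2).support →
      G.Adj u v → (p1.append p2).toSubgraph.Adj u v)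
    (hlen : G.maxDegree + 2 ≤ p1.support.length) :
    ((nbhd G p2.support.toFinset) \ (nbhd G p1.support.toFinset)).card =
      ((nbhd G p2.support.toFinset) \
        (nbhd G (p1.support.drop (p1.support.length - (G.maxDegree + 2))).toFinset)).card := by
  classical
  set D := G.maxDegree with hDdef
  set L := p1.support.length - (D + 2) with hLdef
  -- main claim
  suffices key : ∀ v, v ∈ nbhd G p2.support.toFinset →
      v ∉ nbhd G (p1.support.drop L).toFinset → v ∉ nbhd G p1.support.toFinset by
    have hsets : (nbhd G p2.support.toFinset) \ (nbhd G p1.support.toFinset) =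
        (nbhd G p2.support.toFinset) \ (nbhd G (p1.support.drop L).toFinset) := by
      ext z
      simp only [Finset.mem_sdiff]
      constructor
      · rintro ⟨h2, h1⟩
        refine ⟨h2, fun hz => h1 (nbhd_mono ?_ hz)⟩
        intro a ha
        simp only [List.mem_toFinset] at ha ⊢
        exact List.mem_of_mem_drop ha
      · rintro ⟨h2, hσ⟩
        exact ⟨h2, key z h2 hσ⟩
    rw [hsets]
  intro v hv2 hvσ hv1
  -- setup
  set p := p1.append p2 with hpdef
  set l := p.support with hldef
  have hnodup : l.Nodup := hp.support_nodup
  have hlsplit : l = p1.support ++ p2.support.tail := SimpleGraph.Walk.support_append p1 p2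
  set n1 := p1.length with hn1def
  have hp1len : p1.support.length = n1 + 1 := SimpleGraph.Walk.length_support p1
  have hllen : l.length = n1 + 1 + p2.support.tail.length := by
    rw [hlsplit]; simp [hp1len]
  have hn1l : n1 + 1 ≤ l.length := by omega
  have hLval : L = n1 + 1 - (D + 2) := by rw [hLdef, hp1len]
  have hlen' : D + 2 ≤ n1 + 1 := by rw [← hp1len]; exact hlen
  have hp1pre : l.take (n1 + 1) = p1.support := by
    rw [hlsplit, ← hp1len, List.take_left]
  have hp2tail : l.drop (n1 + 1) = p2.support.tail := by
    rw [hlsplit, ← hp1len, List.drop_left]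
  -- getVert vs support
  have hgl : ∀ (i : ℕ) (hi : i < l.length), l[i] = p.getVert i := fun i hi =>
    walk_support_getElem p i hi
  -- index of m
  have hmidx : ∃ h : n1 < l.length, l[n1] = m := by
    refine ⟨by omega, ?_⟩
    have hmne : p1.support ≠ [] := by
      intro h; rw [h] at hp1len; simp at hp1len
    have h5 : p1.support[p1.support.length - 1]'(by omega) = m := by
      rw [← List.getLast_eq_getElem]; exact SimpleGraph.Walk.getLast_support p1
    have h6 : (l.take (n1+1))[n1]'(by rw [hp1pre]; omega) = m := by
      rw [List.getElem_of_eq hp1pre]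
      convert h5 using 2
      omega
    rw [List.getElem_take] at h6
    exact h6
  obtain ⟨hn1lt, hml⟩ := hmidx
  -- adjacency implies consecutive indices
  have hadjidx : ∀ (a b : V), a ∈ l → b ∈ l → G.Adj a b →
      ∀ (i j : ℕ) (hi : i < l.length) (hj : j < l.length), l[i] = a → l[j] = b →
      (j = i + 1 ∨ i = j + 1) := by
    intro a b ha hb hab i j hi hj hia hjb
    have hsub := hshortcutfree a b ha hb hab
    rw [SimpleGraph.Walk.toSubgraph_adj_iff] at hsub
    obtain ⟨t, hsym, htlt⟩ := hsub
    have hplen : p.length + 1 = l.length := (SimpleGraph.Walk.length_support p).symm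
    have ht1 : t < l.length := by omega
    have ht2 : t + 1 < l.length := by omega
    rw [Sym2.eq_iff] at hsym
    rcases hsym with ⟨h1, h2⟩ | ⟨h1, h2⟩
    · have e1 : l[t] = a := by rw [hgl t ht1]; exact h1
      have e2 : l[t+1] = b := by rw [hgl (t+1) ht2]; exact h2
      have : i = t := hnodup.getElem_inj_iff.mp (by rw [e1, hia])
      have : j = t + 1 := hnodup.getElem_inj_iff.mp (by rw [e2, hjb])
      omega
    · have e1 : l[t] = b := by rw [hgl t ht1]; exact h1
      have e2 : l[t+1] = a := by rw [hgl (t+1) ht2]; exact h2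
      have : j = t := hnodup.getElem_inj_iff.mp (by rw [e1, hjb])
      have : i = t + 1 := hnodup.getElem_inj_iff.mp (by rw [e2, hia])
      omega
  -- unfold hvσ : no vertex of the suffix equals or is adjacent to v
  have hvσ' : ∀ (j : ℕ) (hj : j < l.length), L ≤ j → j < n1 + 1 →
      l[j] ≠ v ∧ ¬ G.Adj l[j] v := by
    intro j hj hLj hjn
    have hmem : l[j] ∈ p1.support.drop L := by
      rw [← hp1pre]
      exact mem_take_drop.mpr ⟨j, hLj, hjn, hj, rfl⟩
    constructor
    · intro he; exact hvσ (mem_nbhd.mpr ⟨l[j], List.mem_toFinset.mpr hmem, Or.inl he⟩)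
    · intro ha; exact hvσ (mem_nbhd.mpr ⟨l[j], List.mem_toFinset.mpr hmem, Or.inr ha⟩)
  -- extract y (in the prefix of p1)
  obtain ⟨y, hy1, hyv⟩ := mem_nbhd.mp hv1
  rw [List.mem_toFinset] at hy1
  have hy_take : y ∈ l.take L := by
    rcases List.mem_append.mp ((List.take_append_drop L p1.support) ▸ hy1) with h | h
    · have : L ≤ n1 + 1 := by omega
      rw [← hp1pre, List.take_take, min_eq_left this] at h
      exact h
    · exfalso
      exact hvσ (mem_nbhd.mpr ⟨y, List.mem_toFinset.mpr h, hyv⟩)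
  have hyidx : ∃ iy, iy < L ∧ ∃ hiy : iy < l.length, l[iy] = y := by
    have : y ∈ (l.take L).drop 0 := by rw [List.drop_zero]; exact hy_take
    obtain ⟨j, _, hjL, hj, he⟩ := mem_take_drop.mp this
    exact ⟨j, hjL, hj, he⟩
  obtain ⟨iy, hiyL, hiylt, hiy⟩ := hyidx
  -- extract x (in p2, not m)
  obtain ⟨x, hx1, hxv⟩ := mem_nbhd.mp hv2
  rw [List.mem_toFinset] at hx1
  have hxm : x ≠ m := by
    intro he
    have hmm : m ∈ p1.support.drop L := by
      rw [← hp1pre]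
      exact mem_take_drop.mpr ⟨n1, by omega, by omega, by omega, hml⟩
    exact hvσ (mem_nbhd.mpr ⟨x, List.mem_toFinset.mpr (he ▸ hmm), hxv⟩)
  have hx_tail : x ∈ p2.support.tail := by
    have h0 : x ∈ m :: p2.support.tail := (SimpleGraph.Walk.support_eq_cons p2) ▸ hx1
    rcases List.mem_cons.mp h0 with h | h
    · exact absurd h hxm
    · exact h
  have hxidx : ∃ ix, n1 + 1 ≤ ix ∧ ∃ hix : ix < l.length, l[ix] = x := by
    have h1 : x ∈ l.drop (n1 + 1) := by rw [hp2tail]; exact hx_tail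
    have h2 : x ∈ (l.take l.length).drop (n1 + 1) := by rw [List.take_length]; exact h1
    obtain ⟨j, hj1, _, hj, he⟩ := mem_take_drop.mp h2
    exact ⟨j, hj1, hj, he⟩
  obtain ⟨ix, hixge, hixlt, hix⟩ := hxidx
  have hxy : x ≠ y := by
    intro he
    have : ix = iy := hnodup.getElem_inj_iff.mp (by rw [hix, hiy, he])
    omega
  -- at least one adjacency to v exists, hence D ≥ 1
  have hD1 : 1 ≤ D := by
    have hadj : (∃ a, G.Adj a v) := by
      rcases hyv with rfl | h
      · rcases hxv with rfl | h
        · exact absurd rfl hxy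
        · exact ⟨x, h⟩
      · exact ⟨y, h⟩
    obtain ⟨a, ha⟩ := hadj
    have h1 : 0 < G.degree a := by
      rw [G.degree_pos_iff_exists_adj a]; exact ⟨v, ha⟩
    have h2 := G.degree_le_maxDegree a
    omega
  -- positions of y and x in l via takeUntil
  have hyp : y ∈ p.support := by
    rw [hldef] at hlsplit
    rw [hlsplit]
    exact List.mem_append_left _ hy1
  have hxp : x ∈ p.support := by
    rw [hldef] at hlsplit
    rw [hlsplit]
    exact List.mem_append_right _ hx_tail
  obtain ⟨ky, hky1, hkyle, hkyT, hkyD, hkylt, hkyget⟩ := takeUntil_support_spec p hyp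
  obtain ⟨kx, hkx1, hkxle, hkxT, hkxD, hkxlt, hkxget⟩ := takeUntil_support_spec p hxp
  -- identify indices
  have hkyiy : ky - 1 = iy := hnodup.getElem_inj_iff.mp (by rw [hkyget, hiy])
  have hkxix : kx - 1 = ix := hnodup.getElem_inj_iff.mp (by rw [hkxget, hix])
  have hkyL : ky ≤ L := by omega
  have hkxn : n1 + 1 ≤ kx - 1 := by omega
  have hLn1 : L + 1 ≤ n1 ∧ L ≤ n1 + 1 := by
    constructor <;> omega
  -- construct the replacement walk q
  obtain ⟨q, hqpath, hqsup, hqextra⟩ :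
      ∃ q : G.Walk s t', q.IsPath ∧
        (∀ w ∈ q.support, (∃ i, i < ky ∧ ∃ hi : i < l.length, l[i] = w) ∨ w = v ∨
          (∃ i, kx - 1 ≤ i ∧ ∃ hi : i < l.length, l[i] = w)) ∧
        ((∃ a, G.Adj v a ∧ a ∈ l) ∨ v ∈ l) := by
    have htake_mem : ∀ (c : ℕ) (w : V), w ∈ l.take c →
        ∃ i, i < c ∧ ∃ hi : i < l.length, l[i] = w := by
      intro c w hw
      have : w ∈ (l.take c).drop 0 := by rw [List.drop_zero]; exact hw
      obtain ⟨j, _, hjc, hj, he⟩ := mem_take_drop.mp this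
      exact ⟨j, hjc, hj, he⟩
    have hdrop_mem : ∀ (d : ℕ) (w : V), w ∈ l.drop d →
        ∃ i, d ≤ i ∧ ∃ hi : i < l.length, l[i] = w := by
      intro d w hw
      have : w ∈ (l.take l.length).drop d := by rw [List.take_length]; exact hw
      obtain ⟨j, hjd, _, hj, he⟩ := mem_take_drop.mp this
      exact ⟨j, hjd, hj, he⟩
    have hkyx : ky ≤ kx - 1 := by omega
    -- shared: the one-edge shortcut
    have honeedge : G.Adj y x → ∃ q : G.Walk s t', q.IsPath ∧
        (∀ w ∈ q.support, (∃ i, i < ky ∧ ∃ hi : i < l.length, l[i] = w) ∨ w = v ∨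
          (∃ i, kx - 1 ≤ i ∧ ∃ hi : i < l.length, l[i] = w)) := by
      intro hyx
      have hsup : ((p.takeUntil y hyp).append
          (SimpleGraph.Walk.cons hyx (p.dropUntil x hxp))).support
          = l.take ky ++ l.drop (kx - 1) := by
        rw [SimpleGraph.Walk.support_append, SimpleGraph.Walk.support_cons, List.tail_cons,
          hkyT, hkxD]
      have hnd : (l.take ky ++ l.drop (kx - 1)).Nodup :=
        (take_append_drop_sublist l hkyx).nodup hnodup
      refine ⟨(p.takeUntil y hyp).append
          (SimpleGraph.Walk.cons hyx (p.dropUntil x hxp)), ?_, ?_⟩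
      · rw [SimpleGraph.Walk.isPath_def, hsup]; exact hnd
      · intro w hw
        rw [hsup] at hw
        rcases List.mem_append.mp hw with h | h
        · exact Or.inl (htake_mem ky w h)
        · exact Or.inr (Or.inr (hdrop_mem (kx - 1) w h))
    by_cases hvy : v = y
    · have hxvne : x ≠ v := fun h => hxy (h.trans hvy)
      have hyx : G.Adj y x := by
        rcases hxv with h | h
        · exact absurd h hxvne
        · exact (hvy ▸ h).symm
      obtain ⟨q, h1, h2⟩ := honeedge hyx
      exact ⟨q, h1, h2, Or.inr (by rw [hvy, hldef]; exact hyp)⟩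
    · by_cases hvx : v = x
      · have hyx : G.Adj y x := by
          rcases hyv with h | h
          · exact absurd h.symm hvy
          · exact hvx ▸ h
        obtain ⟨q, h1, h2⟩ := honeedge hyx
        exact ⟨q, h1, h2, Or.inr (by rw [hvx, hldef]; exact hxp)⟩
      · -- two-edge case
        have hyadj : G.Adj y v := by
          rcases hyv with h | h
          · exact absurd h.symm hvy
          · exact h
        have hvxadj : G.Adj v x := by
          rcases hxv with h | h
          · exact absurd h.symm hvx
          · exact h.symm
        have hvnl : v ∉ l := by
          intro hvl
          obtain ⟨iv, hivlt, hiv⟩ := List.mem_iff_getElem.mp hvl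
          have c1 := hadjidx y v (by rw [hldef]; exact hyp) hvl hyadj
            iy iv hiylt hivlt hiy hiv
          have c2 := hadjidx v x hvl (by rw [hldef]; exact hxp) hvxadj
            iv ix hivlt hixlt hiv hix
          omega
        have hsup : ((p.takeUntil y hyp).append
            (SimpleGraph.Walk.cons hyadj (SimpleGraph.Walk.cons hvxadj
              (p.dropUntil x hxp)))).support
            = l.take ky ++ v :: l.drop (kx - 1) := by
          rw [SimpleGraph.Walk.support_append, SimpleGraph.Walk.support_cons,
            SimpleGraph.Walk.support_cons, List.tail_cons, hkyT, hkxD]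
        have hnd0 : (l.take ky ++ l.drop (kx - 1)).Nodup :=
          (take_append_drop_sublist l hkyx).nodup hnodup
        have hnd : (l.take ky ++ v :: l.drop (kx - 1)).Nodup := by
          rw [List.nodup_middle, List.nodup_cons]
          refine ⟨?_, hnd0⟩
          intro hvmem
          rcases List.mem_append.mp hvmem with h | h
          · exact hvnl (List.mem_of_mem_take h)
          · exact hvnl (List.mem_of_mem_drop h)
        refine ⟨(p.takeUntil y hyp).append
            (SimpleGraph.Walk.cons hyadj (SimpleGraph.Walk.cons hvxadj
              (p.dropUntil x hxp))), ?_, ?_,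
          Or.inl ⟨y, hyadj.symm, by rw [hldef]; exact hyp⟩⟩
        · rw [SimpleGraph.Walk.isPath_def, hsup]; exact hnd
        · intro w hw
          rw [hsup] at hw
          rcases List.mem_append.mp hw with h | h
          · exact Or.inl (htake_mem ky w h)
          · rcases List.mem_cons.mp h with h | h
            · exact Or.inr (Or.inl h)
            · exact Or.inr (Or.inr (hdrop_mem (kx - 1) w h))
  -- counting
  set O := nbhd G l.toFinset with hOdef
  set Q := nbhd G q.support.toFinset with hQdef
  set R := ((p1.support.drop (L+1)).toFinset).erase m with hRdef
  have hp1nodup : p1.support.Nodup := by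
    have h0 : (p1.support ++ p2.support.tail).Nodup := hlsplit ▸ hnodup
    exact (List.sublist_append_left _ _).nodup h0
  have hdropnodup : (p1.support.drop (L+1)).Nodup := (List.drop_sublist _ _).nodup hp1nodup
  have hdroplen : (p1.support.drop (L+1)).length = D + 1 := by
    rw [List.length_drop, hp1len]; omega
  have hmdrop : m ∈ p1.support.drop (L+1) := by
    rw [← hp1pre]
    exact mem_take_drop.mpr ⟨n1, by omega, by omega, by omega, hml⟩
  have hRcard : R.card = D := by
    rw [hRdef, Finset.card_erase_of_mem (List.mem_toFinset.mpr hmdrop),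
      List.toFinset_card_of_nodup hdropnodup, hdroplen]
    omega
  have hRidx : ∀ w ∈ R, ∃ j, L + 1 ≤ j ∧ j ≤ n1 - 1 ∧ ∃ hj : j < l.length, l[j] = w := by
    intro w hw
    rw [hRdef, Finset.mem_erase] at hw
    obtain ⟨hwm, hw2⟩ := hw
    rw [List.mem_toFinset, ← hp1pre] at hw2
    obtain ⟨j, hj1, hj2, hj, he⟩ := mem_take_drop.mp hw2
    have hjn : j ≠ n1 := by
      intro hh
      subst hh
      exact hwm (he ▸ hml)
    exact ⟨j, hj1, by omega, hj, he⟩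
  have hRsub : R ⊆ O := by
    intro w hw
    obtain ⟨j, _, _, hj, he⟩ := hRidx w hw
    rw [hOdef, mem_nbhd]
    exact ⟨w, List.mem_toFinset.mpr (he ▸ List.getElem_mem hj), Or.inl rfl⟩
  have hvO : v ∈ O := by
    refine nbhd_mono (S := p1.support.toFinset) ?_ hv1
    intro a ha
    rw [List.mem_toFinset] at ha ⊢
    rw [hlsplit]
    exact List.mem_append_left _ ha
  have hRQ : ∀ w ∈ R, w ∉ Q := by
    intro w hw hwQ
    obtain ⟨j, hj1, hj2, hj, he⟩ := hRidx w hw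
    rw [hQdef, mem_nbhd] at hwQ
    obtain ⟨u, hu, huw⟩ := hwQ
    rw [List.mem_toFinset] at hu
    rcases hqsup u hu with ⟨i, hik, hi, hie⟩ | rfl | ⟨i, hik, hi, hie⟩
    · rcases huw with rfl | hadj
      · have : i = j := hnodup.getElem_inj_iff.mp (by rw [hie, he])
        omega
      · have := hadjidx u w (hie ▸ List.getElem_mem hi) (he ▸ List.getElem_mem hj)
          hadj i j hi hj hie he
        omega
    · have hσw := hvσ' j hj (by omega) (by omega)
      rcases huw with heq | hadj
      · exact hσw.1 (by rw [he]; exact heq.symm)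
      · exact hσw.2 (by rw [he]; exact hadj.symm)
    · rcases huw with rfl | hadj
      · have : i = j := hnodup.getElem_inj_iff.mp (by rw [hie, he])
        omega
      · have := hadjidx u w (hie ▸ List.getElem_mem hi) (he ▸ List.getElem_mem hj)
          hadj i j hi hj hie he
        omega
  have hQOadj : ∀ z ∈ Q, z ∉ O → G.Adj v z := by
    intro z hz hzO
    rw [hQdef, mem_nbhd] at hz
    obtain ⟨u, hu, huz⟩ := hz
    rw [List.mem_toFinset] at hu
    rcases hqsup u hu with ⟨i, hik, hi, hie⟩ | huv | ⟨i, hik, hi, hie⟩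
    · exfalso
      apply hzO
      rw [hOdef, mem_nbhd]
      exact ⟨u, List.mem_toFinset.mpr (hie ▸ List.getElem_mem hi), huz⟩
    · subst huv
      rcases huz with rfl | hadj
      · exact absurd hvO hzO
      · exact hadj
    · exfalso
      apply hzO
      rw [hOdef, mem_nbhd]
      exact ⟨u, List.mem_toFinset.mpr (hie ▸ List.getElem_mem hi), huz⟩
  have hQOcard : (Q \ O).card + 1 ≤ D := by
    rcases hqextra with ⟨a, hva, hal⟩ | hvl
    · have haO : a ∈ O := by
        rw [hOdef, mem_nbhd]; exact ⟨a, List.mem_toFinset.mpr hal, Or.inl rfl⟩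
      have hsub2 : insert a (Q \ O) ⊆ G.neighborFinset v := by
        intro z hz
        rcases Finset.mem_insert.mp hz with rfl | hz
        · rw [SimpleGraph.mem_neighborFinset]; exact hva
        · rw [SimpleGraph.mem_neighborFinset]
          exact hQOadj z (Finset.mem_sdiff.mp hz).1 (Finset.mem_sdiff.mp hz).2
      have h3 := Finset.card_le_card hsub2
      rw [Finset.card_insert_of_notMem (fun h => (Finset.mem_sdiff.mp h).2 haO)] at h3
      have h4 : G.degree v ≤ D := G.degree_le_maxDegree v
      rw [← SimpleGraph.card_neighborFinset_eq_degree] at h4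
      omega
    · have hempty : Q \ O = ∅ := by
        rw [Finset.eq_empty_iff_forall_notMem]
        intro z hz
        obtain ⟨hzQ, hzO⟩ := Finset.mem_sdiff.mp hz
        have hadj := hQOadj z hzQ hzO
        apply hzO
        rw [hOdef, mem_nbhd]
        exact ⟨v, List.mem_toFinset.mpr hvl, Or.inr hadj⟩
      rw [hempty]
      simpa using hD1
  have hOQ : O.card ≤ Q.card := hopt q hqpath
  have hQle : Q.card ≤ (O \ R).card + (Q \ O).card := by
    have hsub3 : Q ⊆ (O \ R) ∪ (Q \ O) := by
      intro z hz
      by_cases hzO : z ∈ O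
      · exact Finset.mem_union_left _ (Finset.mem_sdiff.mpr ⟨hzO, fun hzR => hRQ z hzR hz⟩)
      · exact Finset.mem_union_right _ (Finset.mem_sdiff.mpr ⟨hz, hzO⟩)
    calc Q.card ≤ ((O \ R) ∪ (Q \ O)).card := Finset.card_le_card hsub3
      _ ≤ (O \ R).card + (Q \ O).card := Finset.card_union_le _ _
  have hOR : (O \ R).card = O.card - R.card := Finset.card_sdiff_of_subset hRsub
  have hRO : R.card ≤ O.card := Finset.card_le_card hRsub
  omega
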